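/- Let w : Fin n → ℝ with w i > 0 and Σ_i w i = 1, set λ i := −Real.log (w i) and K := the diagonal matrix with entries λ i, and let Ω̂ ∈ EuclideanSpace ℂ (Fin n × Fin n) be the Schmidt vector with components Ω̂(i,j) = if i = j then Real.sqrt (w i) else 0. For an n×n complex matrix A and s ∈ ℝ define σ_s(A) := Matrix.exp((−i·s)•K) · A · Matrix.exp((i·s)•K) and the analytically continued σ_{s−i}(A) := Matrix.exp((−i·s − 1)•K) · A · Matrix.exp((i·s + 1)•K). Then the vacuum vector Ω̂ satisfies the KMS condition with respect to the modular evolution on the algebra B(H)⊗1: for all n×n complex matrices A, B and all s ∈ ℝ, ⟨Ω̂, ((σ_s(A) · B) ⊗ₖ 1).mulVec Ω̂⟩ = ⟨Ω̂, ((B · σ_{s−i}(A)) ⊗ₖ 1).mulVec Ω̂⟩. (The paper's Observation (KMS-Property): (Ω|σ_s(A) B Ω) = (Ω|B σ_{s−i}(A) Ω) for the modular automorphism group σ_s = Δ^{is}(·)Δ^{−is}.) -/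

import Mathlib

open Matrix NormedSpace
open scoped Kronecker InnerProductSpace

/-- The component function of a vector in `H ⊗ H`, viewed as an element of
`EuclideanSpace ℂ (Fin n × Fin n)`. -/
noncomputable def vecE {n : ℕ} (v : (Fin n × Fin n) → ℂ) :
    EuclideanSpace ℂ (Fin n × Fin n) :=
  (WithLp.equiv 2 ((Fin n × Fin n) → ℂ)).symm v

lemma exp_smul_diagonal {n : ℕ} (c : ℂ) (d : Fin n → ℂ) :
    NormedSpace.exp (c • Matrix.diagonal d) = Matrix.diagonal (fun i => Complex.exp (c * d i)) := by
  rw [← Matrix.diagonal_smul, Matrix.exp_diagonal]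
  simp [Pi.smul_apply, smul_eq_mul, Complex.exp_eq_exp_ℂ]

lemma inner_vacuum_eq {n : ℕ} (w : Fin n → ℝ) (Ωf : (Fin n × Fin n) → ℂ)
    (hΩf : ∀ i j, Ωf (i, j) = if i = j then (Real.sqrt (w i) : ℂ) else 0)
    (hw : ∀ i, 0 < w i)
    (M : Matrix (Fin n) (Fin n) ℂ) :
    ⟪vecE Ωf, vecE ((M ⊗ₖ (1 : Matrix (Fin n) (Fin n) ℂ)).mulVec Ωf)⟫_ℂ
      = ∑ i, M i i * (w i : ℂ) := by
  simp only [PiLp.inner_apply, vecE, WithLp.equiv_symm_apply, PiLp.toLp_apply, RCLike.inner_apply,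
    Matrix.mulVec, dotProduct, Matrix.kroneckerMap_apply, Matrix.one_apply]
  rw [Fintype.sum_prod_type]
  simp only [Fintype.sum_prod_type, hΩf]
  simp [Finset.mul_sum, apply_ite, Finset.sum_ite_eq, mul_comm, mul_assoc, mul_left_comm]
  exact Finset.sum_congr rfl fun i _ => by
    rw [← Complex.ofReal_mul, Real.mul_self_sqrt (hw i).le]

/-- KMS property of the Schmidt-form vacuum `Ω̂` (weights `w i`, modular Hamiltonian
`K = diag(λ i)` with `λ i = -log (w i)`) for the modular evolution on `B(H)⊗1`:
`⟨Ω̂, (σ_s(A)·B ⊗ 1) Ω̂⟩ = ⟨Ω̂, (B·σ_{s-i}(A) ⊗ 1) Ω̂⟩`, where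
`σ_s(A) = e^{-isK} A e^{isK}` and `σ_{s-i}(A) = e^{(-is-1)K} A e^{(is+1)K}`. -/
theorem vacuum_KMS_property
    (n : ℕ) (w : Fin n → ℝ) (hw : ∀ i, 0 < w i) (hsum : ∑ i, w i = 1)
    (lam : Fin n → ℝ) (hlam : ∀ i, lam i = - Real.log (w i))
    (K : Matrix (Fin n) (Fin n) ℂ)
    (hK : K = Matrix.diagonal (fun i => (lam i : ℂ)))
    (Ωf : (Fin n × Fin n) → ℂ)
    (hΩf : ∀ i j, Ωf (i, j) = if i = j then (Real.sqrt (w i) : ℂ) else 0)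
    (Ω : EuclideanSpace ℂ (Fin n × Fin n)) (hΩ : Ω = vecE Ωf)
    (σ : ℝ → Matrix (Fin n) (Fin n) ℂ → Matrix (Fin n) (Fin n) ℂ)
    (hσ : ∀ (s : ℝ) (A : Matrix (Fin n) (Fin n) ℂ),
      σ s A = NormedSpace.exp ((-(Complex.I * s)) • K) * A * NormedSpace.exp ((Complex.I * s) • K))
    (σc : ℝ → Matrix (Fin n) (Fin n) ℂ → Matrix (Fin n) (Fin n) ℂ)
    (hσc : ∀ (s : ℝ) (A : Matrix (Fin n) (Fin n) ℂ),
      σc s A = NormedSpace.exp ((-(Complex.I * s) - 1) • K) * A * NormedSpace.exp ((Complex.I * s + 1) • K)) :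
    ∀ (A B : Matrix (Fin n) (Fin n) ℂ) (s : ℝ),
      ⟪Ω, vecE (((σ s A * B) ⊗ₖ (1 : Matrix (Fin n) (Fin n) ℂ)).mulVec Ωf)⟫_ℂ
        = ⟪Ω, vecE (((B * σc s A) ⊗ₖ (1 : Matrix (Fin n) (Fin n) ℂ)).mulVec Ωf)⟫_ℂ := by
  intro A B s
  rw [hΩ, inner_vacuum_eq w Ωf hΩf hw, inner_vacuum_eq w Ωf hΩf hw]
  simp only [hσ, hσc, hK, exp_smul_diagonal, Matrix.mul_apply, Matrix.diagonal_apply,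
    Matrix.diagonal_mul, Matrix.mul_diagonal, ite_mul, mul_ite, zero_mul, mul_zero,
    Finset.sum_ite_eq, Finset.sum_ite_eq', Finset.mem_univ, if_true]
  simp only [Finset.sum_mul, Finset.mul_sum]
  rw [Finset.sum_comm (γ := Fin n)]
  refine Finset.sum_congr rfl fun i _ => Finset.sum_congr rfl fun k _ => ?_
  have h1 : ∀ j : Fin n, Complex.exp (-(lam j : ℂ)) = (w j : ℂ) := fun j => by
    have : (-(lam j) : ℝ) = Real.log (w j) := by rw [hlam]; ring
    rw [show (-(lam j : ℂ)) = ((-(lam j) : ℝ) : ℂ) by push_cast; ring, this,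
      ← Complex.ofReal_exp, Real.exp_log (hw j)]
  have h2 : Complex.exp ((lam i : ℂ)) = ((w i : ℂ))⁻¹ := by
    rw [← inv_inv (Complex.exp _), ← Complex.exp_neg, h1 i]
  have e1 : (-(Complex.I * s) - 1) * (lam k : ℂ)
      = -(Complex.I * s) * (lam k) + (-(lam k : ℂ)) := by ring
  have e2 : (Complex.I * s + 1) * (lam i : ℂ)
      = Complex.I * s * (lam i) + (lam i : ℂ) := by ring
  rw [e1, e2, Complex.exp_add, Complex.exp_add, h1 k, h2]
  have hwi : (w i : ℂ) ≠ 0 := Complex.ofReal_ne_zero.mpr (hw i).ne'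
  field_simp
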